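/- With notation as in the canonical simplex decomposition (V a real vector space, v_1,…,v_d linearly independent, σ^i = S(v_1,…,v_i), τ^{d−i} = S(v_{i+1},…,v_d), a, b > 0): if φ is a translation-invariant valuation on convex bodies in V with values in an abelian group (meaning φ(B ∪ C) = φ(B) + φ(C) − φ(B ∩ C) whenever B, C, B ∪ C are convex bodies, and φ(X + w) = φ(X) for all w ∈ V), then φ((a+b)σ^d) = Σ_{i=0}^d φ(a σ^i + b τ^{d−i}) − Σ_{i=1}^d φ(a σ^{i−1} + b τ^{d−i}). -/

import Mathlib

open scoped Pointwise

/-- `simplexS w` is the simplex `S(w_1, …, w_k) =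
{ x_1 w_1 + ⋯ + x_k w_k : 1 ≥ x_1 ≥ ⋯ ≥ x_k ≥ 0 }`. -/
def simplexS {V : Type*} [AddCommGroup V] [Module ℝ V] {k : ℕ} (w : Fin k → V) : Set V :=
  {y | ∃ x : Fin k → ℝ, (∀ i, 0 ≤ x i) ∧ (∀ i, x i ≤ 1) ∧
    (∀ i j : Fin k, i ≤ j → x j ≤ x i) ∧ y = ∑ i, x i • w i}

namespace Stmt14Aux

/-- coordinate window set: supported on `[o, o+m)`, values in `[0,c]`, decreasing on window. -/
def Win (d o m : ℕ) (c : ℝ) : Set (Fin d → ℝ) :=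
  {x | (∀ j : Fin d, j.1 < o → x j = 0) ∧ (∀ j : Fin d, o + m ≤ j.1 → x j = 0) ∧
       (∀ j, 0 ≤ x j) ∧ (∀ j, x j ≤ c) ∧
       (∀ j j' : Fin d, o ≤ j.1 → j ≤ j' → j'.1 < o + m → x j' ≤ x j)}

def Cs (d : ℕ) (a b : ℝ) (i : ℕ) : Set (Fin d → ℝ) :=
  {x | (∀ j, 0 ≤ x j) ∧ (∀ j, x j ≤ a + b) ∧ (∀ j j' : Fin d, j ≤ j' → x j' ≤ x j) ∧
       (∀ j : Fin d, j.1 < i → b ≤ x j) ∧ (∀ j : Fin d, i ≤ j.1 → x j ≤ b)}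

def Us (d : ℕ) (a b : ℝ) (k : ℕ) : Set (Fin d → ℝ) :=
  {x | (∀ j, 0 ≤ x j) ∧ (∀ j, x j ≤ a + b) ∧ (∀ j j' : Fin d, j ≤ j' → x j' ≤ x j) ∧
       (∀ j : Fin d, k ≤ j.1 → x j ≤ b)}

def wvec (d : ℕ) (b : ℝ) (i : ℕ) : Fin d → ℝ := fun j => if j.1 < i then b else 0

def Es (d : ℕ) (a b : ℝ) (k : ℕ) : Set (Fin d → ℝ) := Us d a b k ∩ Cs d a b (k+1)

variable {d : ℕ} {a b : ℝ}

lemma Us_zero (hb : 0 ≤ b) : Us d a b 0 = Cs d a b 0 := by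
  ext x
  simp only [Us, Cs, Set.mem_setOf_eq]
  constructor
  · rintro ⟨h1, h2, h3, h4⟩
    exact ⟨h1, h2, h3, fun j hj => absurd hj (by omega), fun j _ => h4 j (Nat.zero_le _)⟩
  · rintro ⟨h1, h2, h3, _, h5⟩
    exact ⟨h1, h2, h3, fun j _ => h5 j (Nat.zero_le _)⟩

lemma Us_succ (hk : k < d) : Us d a b (k+1) = Us d a b k ∪ Cs d a b (k+1) := by
  ext x
  simp only [Us, Cs, Set.mem_union, Set.mem_setOf_eq]
  constructor
  · rintro ⟨h1, h2, h3, h4⟩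
    by_cases hc : x ⟨k, hk⟩ ≤ b
    · left
      refine ⟨h1, h2, h3, fun j hj => ?_⟩
      rcases Nat.eq_or_lt_of_le hj with h | h
      · have : j = ⟨k, hk⟩ := Fin.ext h.symm
        rw [this]; exact hc
      · exact le_trans (h3 ⟨k, hk⟩ j (Fin.le_def.mpr (by simp; omega))) hc
    · right
      push_neg at hc
      refine ⟨h1, h2, h3, fun j hj => ?_, fun j hj => h4 j hj⟩
      exact le_trans hc.le (h3 j ⟨k, hk⟩ (Fin.le_def.mpr (by simp; omega)))
  · rintro (⟨h1, h2, h3, h4⟩ | ⟨h1, h2, h3, h4, h5⟩)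
    · exact ⟨h1, h2, h3, fun j hj => h4 j (by omega)⟩
    · exact ⟨h1, h2, h3, h5⟩

lemma Win_smul {o m : ℕ} {c : ℝ} (hc : 0 < c) : c • Win d o m 1 = Win d o m c := by
  ext x
  simp only [Set.mem_smul_set]
  constructor
  · rintro ⟨y, ⟨h1, h2, h3, h4, h5⟩, rfl⟩
    refine ⟨fun j hj => by simp [h1 j hj], fun j hj => by simp [h2 j hj],
      fun j => mul_nonneg hc.le (h3 j),
      fun j => by simpa using mul_le_mul_of_nonneg_left (h4 j) hc.le,
      fun j j' hj hjj hj' => mul_le_mul_of_nonneg_left (h5 j j' hj hjj hj') hc.le⟩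
  · rintro ⟨h1, h2, h3, h4, h5⟩
    refine ⟨c⁻¹ • x, ⟨fun j hj => by simp [h1 j hj], fun j hj => by simp [h2 j hj],
      fun j => mul_nonneg (by positivity) (h3 j),
      fun j => by rw [Pi.smul_apply, smul_eq_mul, inv_mul_le_iff₀ hc, mul_one]; exact h4 j,
      fun j j' hj hjj hj' => by
        simp only [Pi.smul_apply, smul_eq_mul]
        exact mul_le_mul_of_nonneg_left (h5 j j' hj hjj hj') (by positivity)⟩, ?_⟩
    ext j
    simp only [Pi.smul_apply, smul_eq_mul, ← mul_assoc, mul_inv_cancel₀ hc.ne', one_mul]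


lemma Cs_eq (ha : 0 < a) (hb : 0 < b) {i : ℕ} (hid : i ≤ d) :
    Cs d a b i = Win d 0 i a + Win d i (d - i) b + {wvec d b i} := by
  ext x
  simp only [Set.mem_add, Set.mem_singleton_iff, Cs, Win, Set.mem_setOf_eq]
  constructor
  · rintro ⟨h1, h2, h3, h4, h5⟩
    refine ⟨(fun j => if j.1 < i then x j - b else 0) + (fun j => if i ≤ j.1 then x j else 0),
      ⟨fun j => if j.1 < i then x j - b else 0, ?_,
       fun j => if i ≤ j.1 then x j else 0, ?_, rfl⟩, wvec d b i, rfl, ?_⟩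
    · refine ⟨fun j hj => by omega, fun j hj => by simp only [if_neg (by omega : ¬ (j:ℕ) < i)],
        fun j => ?_, fun j => ?_, fun j j' hj hjj hj' => ?_⟩
      · dsimp only; split
        · linarith [h4 j (by assumption)]
        · exact le_refl 0
      · dsimp only; split
        · linarith [h2 j]
        · exact ha.le
      · have hj'i : (j':ℕ) < i := by omega
        have hji : (j:ℕ) < i := by have := Fin.le_def.mp hjj; omega
        simp only [if_pos hj'i, if_pos hji]
        linarith [h3 j j' hjj]
    · refine ⟨fun j hj => by simp only [if_neg (by omega : ¬ i ≤ (j:ℕ))],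
        fun j hj => absurd j.isLt (by omega),
        fun j => ?_, fun j => ?_, fun j j' hj hjj hj' => ?_⟩
      · dsimp only; split
        · exact h1 j
        · exact le_refl 0
      · dsimp only; split
        · exact h5 j (by assumption)
        · exact hb.le
      · have hji : i ≤ (j:ℕ) := hj
        have hj'i : i ≤ (j':ℕ) := by have := Fin.le_def.mp hjj; omega
        simp only [if_pos hji, if_pos hj'i]
        exact h3 j j' hjj
    · funext j
      by_cases h : (j:ℕ) < i
      · simp only [Pi.add_apply, wvec, if_pos h, if_neg (by omega : ¬ i ≤ (j:ℕ))]; ring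
      · simp only [Pi.add_apply, wvec, if_neg h, if_pos (by omega : i ≤ (j:ℕ))]; ring
  · rintro ⟨p, ⟨y, ⟨hy1, hy2, hy3, hy4, hy5⟩, z, ⟨hz1, hz2, hz3, hz4, hz5⟩, rfl⟩, q, rfl, rfl⟩
    have hyz : ∀ j : Fin d, (y + z + wvec d b i) j
        = (if (j:ℕ) < i then y j + b else z j) := by
      intro j
      by_cases h : (j:ℕ) < i
      · simp only [Pi.add_apply, wvec, if_pos h, hz1 j h]; ring
      · simp only [Pi.add_apply, wvec, if_neg h, hy2 j (by omega)]; ring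
    refine ⟨fun j => ?_, fun j => ?_, fun j j' hjj => ?_, fun j hj => ?_, fun j hj => ?_⟩
    · rw [hyz j]; split
      · linarith [hy3 j]
      · exact hz3 j
    · rw [hyz j]; split
      · linarith [hy4 j]
      · linarith [hz4 j]
    · rw [hyz j, hyz j']
      have hle := Fin.le_def.mp hjj
      by_cases h : (j:ℕ) < i
      · by_cases h' : (j':ℕ) < i
        · simp only [if_pos h, if_pos h']
          have := hy5 j j' (by omega) hjj (by omega)
          linarith
        · simp only [if_pos h, if_neg h']
          linarith [hz4 j', hy3 j]
      · simp only [if_neg h, if_neg (by omega : ¬ (j':ℕ) < i)]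
        exact hz5 j j' (by omega) hjj (by omega)
    · rw [hyz j, if_pos hj]
      linarith [hy3 j]
    · rw [hyz j, if_neg (by omega : ¬ (j:ℕ) < i)]
      exact hz4 j

lemma Es_eq (ha : 0 < a) (hb : 0 < b) {k : ℕ} (hk : k < d) :
    Es d a b k = Win d 0 k a + Win d (k+1) (d - (k+1)) b + {wvec d b (k+1)} := by
  ext x
  simp only [Set.mem_add, Set.mem_singleton_iff, Es, Us, Cs, Set.mem_inter_iff,
    Set.mem_setOf_eq]
  constructor
  · rintro ⟨⟨h1, h2, h3, h4⟩, ⟨_, _, _, h5, h6⟩⟩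
    refine ⟨(fun j => if j.1 < k then x j - b else 0) + (fun j => if k+1 ≤ j.1 then x j else 0),
      ⟨fun j => if j.1 < k then x j - b else 0, ?_,
       fun j => if k+1 ≤ j.1 then x j else 0, ?_, rfl⟩, wvec d b (k+1), rfl, ?_⟩
    · refine ⟨fun j hj => by omega, fun j hj => by simp only [if_neg (by omega : ¬ (j:ℕ) < k)],
        fun j => ?_, fun j => ?_, fun j j' hj hjj hj' => ?_⟩
      · dsimp only; split
        · linarith [h5 j (by omega)]
        · exact le_refl 0
      · dsimp only; split
        · linarith [h2 j]
        · exact ha.le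
      · have hj'i : (j':ℕ) < k := by omega
        have hji : (j:ℕ) < k := by have := Fin.le_def.mp hjj; omega
        simp only [if_pos hj'i, if_pos hji]
        linarith [h3 j j' hjj]
    · refine ⟨fun j hj => by simp only [if_neg (by omega : ¬ k+1 ≤ (j:ℕ))],
        fun j hj => absurd j.isLt (by omega),
        fun j => ?_, fun j => ?_, fun j j' hj hjj hj' => ?_⟩
      · dsimp only; split
        · exact h1 j
        · exact le_refl 0
      · dsimp only; split
        · exact h6 j (by assumption)
        · exact hb.le
      · have hji : k+1 ≤ (j:ℕ) := hj
        have hj'i : k+1 ≤ (j':ℕ) := by have := Fin.le_def.mp hjj; omega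
        simp only [if_pos hji, if_pos hj'i]
        exact h3 j j' hjj
    · funext j
      rcases lt_trichotomy (j:ℕ) k with h | h | h
      · simp only [Pi.add_apply, wvec, if_pos h, if_neg (by omega : ¬ k+1 ≤ (j:ℕ)),
          if_pos (by omega : (j:ℕ) < k+1)]; ring
      · have hxb : x j = b := le_antisymm (h4 j (by omega)) (h5 j (by omega))
        simp only [Pi.add_apply, wvec, if_neg (by omega : ¬ (j:ℕ) < k),
          if_neg (by omega : ¬ k+1 ≤ (j:ℕ)), if_pos (by omega : (j:ℕ) < k+1), hxb]; ring
      · simp only [Pi.add_apply, wvec, if_neg (by omega : ¬ (j:ℕ) < k),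
          if_pos (by omega : k+1 ≤ (j:ℕ)), if_neg (by omega : ¬ (j:ℕ) < k+1)]; ring
  · rintro ⟨p, ⟨y, ⟨hy1, hy2, hy3, hy4, hy5⟩, z, ⟨hz1, hz2, hz3, hz4, hz5⟩, rfl⟩, q, rfl, rfl⟩
    have hyz : ∀ j : Fin d, (y + z + wvec d b (k+1)) j
        = (if (j:ℕ) < k then y j + b else if (j:ℕ) = k then b else z j) := by
      intro j
      rcases lt_trichotomy (j:ℕ) k with h | h | h
      · simp only [Pi.add_apply, wvec, if_pos h, hz1 j (by omega),
          if_pos (by omega : (j:ℕ) < k+1)]; ring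
      · simp only [Pi.add_apply, wvec, if_neg (by omega : ¬ (j:ℕ) < k), if_pos h,
          hz1 j (by omega), hy2 j (by omega), if_pos (by omega : (j:ℕ) < k+1)]; ring
      · simp only [Pi.add_apply, wvec, if_neg (by omega : ¬ (j:ℕ) < k),
          if_neg (by omega : ¬ (j:ℕ) = k), hy2 j (by omega),
          if_neg (by omega : ¬ (j:ℕ) < k+1)]; ring
    have hdec : ∀ j j' : Fin d, j ≤ j' →
        (y + z + wvec d b (k+1)) j' ≤ (y + z + wvec d b (k+1)) j := by
      intro j j' hjj
      have hle := Fin.le_def.mp hjj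
      rw [hyz j, hyz j']
      rcases lt_trichotomy (j:ℕ) k with h | h | h
      · rcases lt_trichotomy (j':ℕ) k with h' | h' | h'
        · simp only [if_pos h, if_pos h']
          linarith [hy5 j j' (by omega) hjj (by omega)]
        · simp only [if_pos h, if_neg (by omega : ¬ (j':ℕ) < k), if_pos h']
          linarith [hy3 j]
        · simp only [if_pos h, if_neg (by omega : ¬ (j':ℕ) < k),
            if_neg (by omega : ¬ (j':ℕ) = k)]
          linarith [hy3 j, hz4 j']
      · simp only [if_neg (by omega : ¬ (j:ℕ) < k), if_pos h,
          if_neg (by omega : ¬ (j':ℕ) < k)]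
        by_cases h' : (j':ℕ) = k
        · simp only [if_pos h']; exact le_refl b
        · simp only [if_neg h']
          exact hz4 j'
      · simp only [if_neg (by omega : ¬ (j:ℕ) < k), if_neg (by omega : ¬ (j:ℕ) = k),
          if_neg (by omega : ¬ (j':ℕ) < k), if_neg (by omega : ¬ (j':ℕ) = k)]
        exact hz5 j j' (by omega) hjj (by omega)
    have hnn : ∀ j : Fin d, 0 ≤ (y + z + wvec d b (k+1)) j := by
      intro j; rw [hyz j]
      split
      · linarith [hy3 j]
      · split
        · exact hb.le
        · exact hz3 j
    have hub : ∀ j : Fin d, (y + z + wvec d b (k+1)) j ≤ a + b := by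
      intro j; rw [hyz j]
      split
      · linarith [hy4 j]
      · split
        · linarith
        · linarith [hz4 j]
    refine ⟨⟨hnn, hub, hdec, fun j hj => ?_⟩, ⟨hnn, hub, hdec, fun j hj => ?_, fun j hj => ?_⟩⟩
    · rw [hyz j]
      rcases lt_trichotomy (j:ℕ) k with h | h | h
      · omega
      · simp only [if_neg (by omega : ¬ (j:ℕ) < k), if_pos h]; exact le_refl b
      · simp only [if_neg (by omega : ¬ (j:ℕ) < k), if_neg (by omega : ¬ (j:ℕ) = k)]
        exact hz4 j
    · rw [hyz j]
      rcases lt_trichotomy (j:ℕ) k with h | h | h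
      · simp only [if_pos h]; linarith [hy3 j]
      · simp only [if_neg (by omega : ¬ (j:ℕ) < k), if_pos h]; exact le_refl b
      · omega
    · rw [hyz j]
      simp only [if_neg (by omega : ¬ (j:ℕ) < k), if_neg (by omega : ¬ (j:ℕ) = k)]
      exact hz4 j

lemma combo_le {s t u p q : ℝ} (hs : 0 ≤ s) (ht : 0 ≤ t) (hst : s + t = 1)
    (hp : p ≤ u) (hq : q ≤ u) : s * p + t * q ≤ u := by
  calc s * p + t * q ≤ s * u + t * u :=
        add_le_add (mul_le_mul_of_nonneg_left hp hs) (mul_le_mul_of_nonneg_left hq ht)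
    _ = u := by rw [← add_mul, hst, one_mul]

lemma le_combo {s t u p q : ℝ} (hs : 0 ≤ s) (ht : 0 ≤ t) (hst : s + t = 1)
    (hp : u ≤ p) (hq : u ≤ q) : u ≤ s * p + t * q := by
  calc u = s * u + t * u := by rw [← add_mul, hst, one_mul]
    _ ≤ s * p + t * q :=
        add_le_add (mul_le_mul_of_nonneg_left hp hs) (mul_le_mul_of_nonneg_left hq ht)

lemma convex_Us {k : ℕ} : Convex ℝ (Us d a b k) := by
  rintro x ⟨x1, x2, x3, x4⟩ y ⟨y1, y2, y3, y4⟩ s t hs ht hst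
  refine ⟨fun j => ?_, fun j => ?_, fun j j' hjj => ?_, fun j hj => ?_⟩ <;>
    simp only [Pi.add_apply, Pi.smul_apply, smul_eq_mul]
  · exact add_nonneg (mul_nonneg hs (x1 j)) (mul_nonneg ht (y1 j))
  · exact combo_le hs ht hst (x2 j) (y2 j)
  · linarith [mul_le_mul_of_nonneg_left (x3 j j' hjj) hs,
      mul_le_mul_of_nonneg_left (y3 j j' hjj) ht]
  · exact combo_le hs ht hst (x4 j hj) (y4 j hj)

lemma convex_Cs {i : ℕ} : Convex ℝ (Cs d a b i) := by
  rintro x ⟨x1, x2, x3, x4, x5⟩ y ⟨y1, y2, y3, y4, y5⟩ s t hs ht hst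
  refine ⟨fun j => ?_, fun j => ?_, fun j j' hjj => ?_, fun j hj => ?_, fun j hj => ?_⟩ <;>
    simp only [Pi.add_apply, Pi.smul_apply, smul_eq_mul]
  · exact add_nonneg (mul_nonneg hs (x1 j)) (mul_nonneg ht (y1 j))
  · exact combo_le hs ht hst (x2 j) (y2 j)
  · linarith [mul_le_mul_of_nonneg_left (x3 j j' hjj) hs,
      mul_le_mul_of_nonneg_left (y3 j j' hjj) ht]
  · exact le_combo hs ht hst (x4 j hj) (y4 j hj)
  · exact combo_le hs ht hst (x5 j hj) (y5 j hj)

lemma isClosed_Us {k : ℕ} : IsClosed (Us d a b k) := by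
  have he : Us d a b k =
      ((⋂ j, {x : Fin d → ℝ | 0 ≤ x j}) ∩ (⋂ j, {x | x j ≤ a + b}) ∩
      (⋂ j, ⋂ j', ⋂ (_ : j ≤ j'), {x | x j' ≤ x j})) ∩
      (⋂ j, ⋂ (_ : k ≤ j.1), {x | x j ≤ b}) := by
    ext x
    simp only [Us, Set.mem_setOf_eq, Set.mem_inter_iff, Set.mem_iInter]
    tauto
  rw [he]
  refine IsClosed.inter (IsClosed.inter (IsClosed.inter ?_ ?_) ?_) ?_
  · exact isClosed_iInter fun j => isClosed_le continuous_const (continuous_apply j)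
  · exact isClosed_iInter fun j => isClosed_le (continuous_apply j) continuous_const
  · exact isClosed_iInter fun j => isClosed_iInter fun j' => isClosed_iInter fun _ =>
      isClosed_le (continuous_apply j') (continuous_apply j)
  · exact isClosed_iInter fun j => isClosed_iInter fun _ =>
      isClosed_le (continuous_apply j) continuous_const

lemma isClosed_Cs {i : ℕ} : IsClosed (Cs d a b i) := by
  have he : Cs d a b i =
      ((⋂ j, {x : Fin d → ℝ | 0 ≤ x j}) ∩ (⋂ j, {x | x j ≤ a + b}) ∩
      (⋂ j, ⋂ j', ⋂ (_ : j ≤ j'), {x | x j' ≤ x j})) ∩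
      ((⋂ j, ⋂ (_ : j.1 < i), {x | b ≤ x j}) ∩ (⋂ j, ⋂ (_ : i ≤ j.1), {x | x j ≤ b})) := by
    ext x
    simp only [Cs, Set.mem_setOf_eq, Set.mem_inter_iff, Set.mem_iInter]
    tauto
  rw [he]
  refine IsClosed.inter (IsClosed.inter (IsClosed.inter ?_ ?_) ?_) (IsClosed.inter ?_ ?_)
  · exact isClosed_iInter fun j => isClosed_le continuous_const (continuous_apply j)
  · exact isClosed_iInter fun j => isClosed_le (continuous_apply j) continuous_const
  · exact isClosed_iInter fun j => isClosed_iInter fun j' => isClosed_iInter fun _ =>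
      isClosed_le (continuous_apply j') (continuous_apply j)
  · exact isClosed_iInter fun j => isClosed_iInter fun _ =>
      isClosed_le continuous_const (continuous_apply j)
  · exact isClosed_iInter fun j => isClosed_iInter fun _ =>
      isClosed_le (continuous_apply j) continuous_const

lemma isCompact_Us {k : ℕ} : IsCompact (Us d a b k) := by
  refine IsCompact.of_isClosed_subset (isCompact_univ_pi fun _ : Fin d => isCompact_Icc
    (a := (0:ℝ)) (b := a + b)) isClosed_Us ?_
  rintro x ⟨h1, h2, _, _⟩ j _
  exact ⟨h1 j, h2 j⟩

lemma isCompact_Cs {i : ℕ} : IsCompact (Cs d a b i) := by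
  refine IsCompact.of_isClosed_subset (isCompact_univ_pi fun _ : Fin d => isCompact_Icc
    (a := (0:ℝ)) (b := a + b)) isClosed_Cs ?_
  rintro x ⟨h1, h2, _, _, _⟩ j _
  exact ⟨h1 j, h2 j⟩

lemma nonempty_Us (ha : 0 < a) (hb : 0 < b) {k : ℕ} : (Us d a b k).Nonempty :=
  ⟨0, fun j => le_refl 0, fun j => by positivity, fun j j' _ => le_refl 0, fun j _ => hb.le⟩

lemma nonempty_Cs (ha : 0 < a) (hb : 0 < b) {i : ℕ} : (Cs d a b i).Nonempty := by
  refine ⟨wvec d b i, fun j => ?_, fun j => ?_, fun j j' hjj => ?_, fun j hj => ?_, fun j hj => ?_⟩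
  · unfold wvec; split
    · exact hb.le
    · exact le_refl 0
  · unfold wvec; split
    · linarith
    · positivity
  · unfold wvec
    have hle := Fin.le_def.mp hjj
    by_cases h : (j:ℕ) < i
    · rw [if_pos h]; split
      · exact le_refl b
      · exact hb.le
    · rw [if_neg h, if_neg (by omega : ¬ (j':ℕ) < i)]
  · rw [wvec, if_pos hj]
  · rw [wvec, if_neg (by omega : ¬ (j:ℕ) < i)]
    exact hb.le

section Vside

variable {V : Type*} [AddCommGroup V] [Module ℝ V] {d : ℕ} (v : Fin d → V)

def Lmap : (Fin d → ℝ) →ₗ[ℝ] V where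
  toFun x := ∑ i, x i • v i
  map_add' x y := by
    simp only [Pi.add_apply, add_smul, Finset.sum_add_distrib]
  map_smul' c x := by
    simp only [Pi.smul_apply, smul_eq_mul, RingHom.id_apply, Finset.smul_sum, smul_smul]

lemma Lmap_apply (x : Fin d → ℝ) : Lmap v x = ∑ i, x i • v i := rfl

lemma Lmap_inj (hv : LinearIndependent ℝ v) : Function.Injective (Lmap v) := by
  intro x y hxy
  have h0 : ∑ i, (x - y) i • v i = 0 := by
    have : Lmap v (x - y) = 0 := by rw [map_sub, hxy, sub_self]
    simpa [Lmap_apply] using this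
  funext i
  have := Fintype.linearIndependent_iff.mp hv (x - y) h0 i
  simp only [Pi.sub_apply] at this
  linarith

lemma Lmap_image_add (A B : Set (Fin d → ℝ)) :
    Lmap v '' (A + B) = Lmap v '' A + Lmap v '' B := by
  ext y
  simp only [Set.mem_image, Set.mem_add]
  constructor
  · rintro ⟨x, ⟨p, hp, q, hq, rfl⟩, rfl⟩
    exact ⟨Lmap v p, ⟨p, hp, rfl⟩, Lmap v q, ⟨q, hq, rfl⟩, (map_add _ _ _).symm⟩
  · rintro ⟨_, ⟨p, hp, rfl⟩, _, ⟨q, hq, rfl⟩, rfl⟩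
    exact ⟨p + q, ⟨p, hp, q, hq, rfl⟩, map_add _ _ _⟩

lemma Lmap_image_smul (c : ℝ) (A : Set (Fin d → ℝ)) :
    Lmap v '' (c • A) = c • (Lmap v '' A) := by
  ext y
  simp only [Set.mem_image, Set.mem_smul_set]
  constructor
  · rintro ⟨x, ⟨p, hp, rfl⟩, rfl⟩
    exact ⟨Lmap v p, ⟨p, hp, rfl⟩, (map_smul _ _ _).symm⟩
  · rintro ⟨_, ⟨p, hp, rfl⟩, rfl⟩
    exact ⟨c • p, ⟨p, hp, rfl⟩, map_smul _ _ _⟩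

lemma Lmap_image_vadd (A : Set (Fin d → ℝ)) (w : Fin d → ℝ) :
    Lmap v '' (A + {w}) = (fun x => x + Lmap v w) '' (Lmap v '' A) := by
  rw [Set.add_singleton, Set.image_image, Set.image_image]
  apply Set.image_congr
  intro x _
  exact map_add _ _ _

lemma sum_window {o m : ℕ} (hm : o + m ≤ d) (X : Fin d → ℝ)
    (h1 : ∀ j : Fin d, j.1 < o → X j = 0) (h2 : ∀ j : Fin d, o + m ≤ j.1 → X j = 0) :
    ∑ j, X j • v j = ∑ t : Fin m, X ⟨o + t.1, by omega⟩ • v ⟨o + t.1, by omega⟩ := by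
  classical
  have hinj : ∀ x ∈ (Finset.univ : Finset (Fin m)), ∀ y ∈ (Finset.univ : Finset (Fin m)),
      (fun t : Fin m => (⟨o + t.1, by omega⟩ : Fin d)) x
        = (fun t : Fin m => (⟨o + t.1, by omega⟩ : Fin d)) y → x = y := by
    intro x _ y _ h
    have := Fin.mk.injEq .. ▸ h
    exact Fin.ext (by omega)
  rw [← Finset.sum_image (f := fun j : Fin d => X j • v j) hinj]
  apply (Finset.sum_subset (Finset.subset_univ _) _).symm
  intro j _ hj
  have : j.1 < o ∨ o + m ≤ j.1 := by
    by_contra hc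
    push_neg at hc
    exact hj (Finset.mem_image.mpr ⟨⟨j.1 - o, by omega⟩, Finset.mem_univ _,
      Fin.ext (by simp; omega)⟩)
  rcases this with h | h
  · rw [h1 j h, zero_smul]
  · rw [h2 j h, zero_smul]

lemma simplex_window {o m : ℕ} (hm : o + m ≤ d) :
    simplexS (fun t : Fin m => v ⟨o + t.1, by omega⟩) = Lmap v '' Win d o m 1 := by
  ext y
  simp only [simplexS, Set.mem_setOf_eq, Set.mem_image]
  constructor
  · rintro ⟨x, hx0, hx1, hxd, rfl⟩
    refine ⟨fun j => if h : o ≤ j.1 ∧ j.1 < o + m then x ⟨j.1 - o, by omega⟩ else 0,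
      ⟨fun j hj => by dsimp only; rw [dif_neg (by omega)], fun j hj => by dsimp only; rw [dif_neg (by omega)],
       fun j => ?_, fun j => ?_, fun j j' hj hjj hj' => ?_⟩, ?_⟩
    · dsimp only; split
      · exact hx0 _
      · exact le_refl 0
    · dsimp only; split
      · exact hx1 _
      · exact zero_le_one
    · have hj'2 : o ≤ j'.1 := le_trans hj (Fin.le_def.mp hjj)
      have hj2 : j.1 < o + m := by have := Fin.le_def.mp hjj; omega
      dsimp only
      rw [dif_pos ⟨hj'2, hj'⟩, dif_pos ⟨hj, hj2⟩]
      exact hxd _ _ (by simp only [Fin.mk_le_mk]; have := Fin.le_def.mp hjj; omega)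
    · rw [Lmap_apply, sum_window v hm _ (fun j hj => by rw [dif_neg (by omega)])
        (fun j hj => by rw [dif_neg (by omega)])]
      apply Finset.sum_congr rfl
      intro t _
      dsimp only
      rw [dif_pos ⟨by omega, by omega⟩]
      congr 1
      exact congrArg x (Fin.ext (by simp))
  · rintro ⟨X, ⟨h1, h2, h3, h4, h5⟩, rfl⟩
    refine ⟨fun t => X ⟨o + t.1, by omega⟩, fun t => h3 _, fun t => h4 _,
      fun t t' htt => h5 _ _ (by show o ≤ o + t.1; omega) (by simp only [Fin.mk_le_mk]; omega) (by show o + t'.1 < o + m; omega), ?_⟩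
    rw [Lmap_apply, sum_window v hm X h1 h2]

end Vside

lemma Win_top {c : ℝ} : Win d 0 d c = {x : Fin d → ℝ | (∀ j, 0 ≤ x j) ∧ (∀ j, x j ≤ c) ∧
    (∀ j j' : Fin d, j ≤ j' → x j' ≤ x j)} := by
  ext x
  simp only [Win, Set.mem_setOf_eq]
  constructor
  · rintro ⟨h1, h2, h3, h4, h5⟩
    exact ⟨h3, h4, fun j j' hjj => h5 j j' (by omega) hjj (by omega)⟩
  · rintro ⟨h1, h2, h3⟩
    exact ⟨fun j hj => by omega, fun j hj => absurd j.isLt (by omega), h1, h2,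
      fun j j' _ hjj _ => h3 j j' hjj⟩

lemma Win_top_Us : Win d 0 d (a + b) = Us d a b d := by
  rw [Win_top]
  ext x
  simp only [Us, Set.mem_setOf_eq]
  exact ⟨fun ⟨h1, h2, h3⟩ => ⟨h1, h2, h3, fun j hj => absurd j.isLt (by omega)⟩,
    fun ⟨h1, h2, h3, _⟩ => ⟨h1, h2, h3⟩⟩

section Key

variable {V M : Type*} [TopologicalSpace V] [AddCommGroup V] [Module ℝ V]
  [IsTopologicalAddGroup V] [ContinuousSMul ℝ V] [AddCommGroup M]

lemma Lmap_cont {d : ℕ} (v : Fin d → V) : Continuous (Lmap v) := by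
  show Continuous fun x : Fin d → ℝ => ∑ i, x i • v i
  exact continuous_finset_sum _ fun i _ => (continuous_apply i).smul continuous_const

lemma key (φ : Set V → M)
    (hval : ∀ B C : Set V,
      B.Nonempty → IsCompact B → Convex ℝ B →
      C.Nonempty → IsCompact C → Convex ℝ C →
      Convex ℝ (B ∪ C) →
      φ (B ∪ C) = φ B + φ C - φ (B ∩ C))
    {d : ℕ} (v : Fin d → V) (hv : LinearIndependent ℝ v)
    {a b : ℝ} (ha : 0 < a) (hb : 0 < b) :
    ∀ k, k ≤ d →
    φ (Lmap v '' Us d a b k)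
      = (∑ i ∈ Finset.range (k+1), φ (Lmap v '' Cs d a b i))
        - ∑ i ∈ Finset.range k, φ (Lmap v '' Es d a b i) := by
  intro k
  induction k with
  | zero =>
    intro _
    rw [Us_zero (a := a) hb.le, Finset.sum_range_one, Finset.sum_range_zero, sub_zero]
  | succ k ih =>
    intro hk
    have hkd : k < d := hk
    have hconv : Convex ℝ (Lmap v '' Us d a b k ∪ Lmap v '' Cs d a b (k+1)) := by
      rw [← Set.image_union, ← Us_succ hkd]
      exact convex_Us.linear_image _
    rw [show Us d a b (k+1) = Us d a b k ∪ Cs d a b (k+1) from Us_succ hkd, Set.image_union,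
      hval _ _ ((nonempty_Us ha hb).image _) (isCompact_Us.image (Lmap_cont v))
        (convex_Us.linear_image _) ((nonempty_Cs ha hb).image _)
        (isCompact_Cs.image (Lmap_cont v)) (convex_Cs.linear_image _) hconv,
      ← Set.image_inter (Lmap_inj v hv), ih (by omega),
      Finset.sum_range_succ (n := k+1),
      Finset.sum_range_succ (f := fun i => φ (Lmap v '' Es d a b i)) (n := k)]
    have hE : Us d a b k ∩ Cs d a b (k+1) = Es d a b k := rfl
    rw [hE]
    abel

end Key

end Stmt14Aux

open Stmt14Aux

theorem stmt14 {V M : Type*} [TopologicalSpace V] [AddCommGroup V] [Module ℝ V]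
    [IsTopologicalAddGroup V] [ContinuousSMul ℝ V] [T2Space V] [FiniteDimensional ℝ V]
    [AddCommGroup M]
    (φ : Set V → M)
    -- φ is a valuation on convex bodies:
    (hval : ∀ B C : Set V,
      B.Nonempty → IsCompact B → Convex ℝ B →
      C.Nonempty → IsCompact C → Convex ℝ C →
      Convex ℝ (B ∪ C) →
      φ (B ∪ C) = φ B + φ C - φ (B ∩ C))
    -- φ is translation-invariant:
    (htrans : ∀ (X : Set V) (w : V), φ ((fun x => x + w) '' X) = φ X)
    {d : ℕ} (v : Fin d → V) (hv : LinearIndependent ℝ v)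
    (a b : ℝ) (ha : 0 < a) (hb : 0 < b)
    -- `σ i = S(v_1, …, v_i)`:
    (σ : Fin (d + 1) → Set V)
    (hσ : ∀ i, σ i = simplexS (fun t : Fin i.1 => v (Fin.castLE i.is_le t)))
    -- `τ i = S(v_{i+1}, …, v_d)`:
    (τ : Fin (d + 1) → Set V)
    (hτ : ∀ i, τ i = simplexS (fun t : Fin (d - i.1) => v ⟨i.1 + t.1, by omega⟩))
    -- `σm i = S(v_1, …, v_{i-1})`:
    (σm : Fin (d + 1) → Set V)
    (hσm : ∀ i, σm i = simplexS (fun t : Fin (i.1 - 1) => v ⟨t.1, by omega⟩)) :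
    φ ((a + b) • simplexS v)
      = (∑ i : Fin (d + 1), φ (a • σ i + b • τ i))
        - ∑ i ∈ Finset.univ.filter (fun i : Fin (d + 1) => 1 ≤ i.1),
            φ (a • σm i + b • τ i) := by
  
  classical
  -- LHS
  have hsimW : simplexS v = Lmap v '' Win d 0 d 1 := by
    have hveq : v = fun t : Fin d => v ⟨0 + t.1, by omega⟩ := by
      funext t; congr 1; exact Fin.ext (by simp)
    conv_lhs => rw [hveq]
    exact simplex_window v (by omega)
  have hLHS : (a + b) • simplexS v = Lmap v '' Us d a b d := by
    rw [hsimW, ← Lmap_image_smul, Win_smul (by linarith), Win_top_Us]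
  -- terms
  have hterm1 : ∀ i : Fin (d + 1), φ (a • σ i + b • τ i) = φ (Lmap v '' Cs d a b i.1) := by
    intro i
    have hid : i.1 ≤ d := by omega
    have hσi : σ i = Lmap v '' Win d 0 i.1 1 := by
      rw [hσ i]
      have hfeq : (fun t : Fin i.1 => v (Fin.castLE i.is_le t))
          = fun t : Fin i.1 => v ⟨0 + t.1, by omega⟩ := by
        funext t; congr 1; exact Fin.ext (by simp [Fin.castLE])
      rw [hfeq]
      exact simplex_window v (by omega)
    have hτi : τ i = Lmap v '' Win d i.1 (d - i.1) 1 := by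
      rw [hτ i]; exact simplex_window v (by omega)
    rw [hσi, hτi, ← Lmap_image_smul, ← Lmap_image_smul, Win_smul ha, Win_smul hb,
      ← Lmap_image_add, Cs_eq ha hb hid, Lmap_image_vadd, htrans]
  have hterm2 : ∀ i : Fin (d + 1), 1 ≤ i.1 →
      φ (a • σm i + b • τ i) = φ (Lmap v '' Es d a b (i.1 - 1)) := by
    intro i hi
    have hid : i.1 ≤ d := by omega
    have hk : i.1 - 1 < d := by omega
    have hσi : σm i = Lmap v '' Win d 0 (i.1 - 1) 1 := by
      rw [hσm i]
      have hfeq : (fun t : Fin (i.1 - 1) => v ⟨t.1, by omega⟩)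
          = fun t : Fin (i.1 - 1) => v ⟨0 + t.1, by omega⟩ := by
        funext t; congr 1; exact Fin.ext (by simp)
      rw [hfeq]
      exact simplex_window v (by omega)
    have hτi : τ i = Lmap v '' Win d i.1 (d - i.1) 1 := by
      rw [hτ i]; exact simplex_window v (by omega)
    have harg : i.1 - 1 + 1 = i.1 := by omega
    rw [hσi, hτi, ← Lmap_image_smul, ← Lmap_image_smul, Win_smul ha, Win_smul hb,
      ← Lmap_image_add, Es_eq ha hb hk, harg, Lmap_image_vadd, htrans]
  -- sums
  have hsum1 : (∑ i : Fin (d + 1), φ (a • σ i + b • τ i))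
      = ∑ i ∈ Finset.range (d + 1), φ (Lmap v '' Cs d a b i) := by
    rw [Finset.sum_congr rfl (fun i _ => hterm1 i)]
    exact Fin.sum_univ_eq_sum_range (fun n => φ (Lmap v '' Cs d a b n)) (d + 1)
  have hsum2 : (∑ i ∈ Finset.univ.filter (fun i : Fin (d + 1) => 1 ≤ i.1),
        φ (a • σm i + b • τ i))
      = ∑ i ∈ Finset.range d, φ (Lmap v '' Es d a b i) := by
    rw [Finset.sum_congr rfl (fun i hi => hterm2 i (Finset.mem_filter.mp hi).2)]
    refine Finset.sum_nbij' (fun i : Fin (d + 1) => i.1 - 1)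
      (fun n : ℕ => (⟨min (n + 1) d, by omega⟩ : Fin (d + 1))) ?_ ?_ ?_ ?_ ?_
    · intro i hi
      have h1 := (Finset.mem_filter.mp hi).2
      have h2 : i.1 ≤ d := by omega
      exact Finset.mem_range.mpr (show i.1 - 1 < d by omega)
    · intro n hn
      have := Finset.mem_range.mp hn
      refine Finset.mem_filter.mpr ⟨Finset.mem_univ _, ?_⟩
      show 1 ≤ min (n + 1) d
      omega
    · intro i hi
      have h1 := (Finset.mem_filter.mp hi).2
      have h2 : i.1 ≤ d := by omega
      exact Fin.ext (show min (i.1 - 1 + 1) d = i.1 by omega)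
    · intro n hn
      have := Finset.mem_range.mp hn
      show min (n + 1) d - 1 = n
      omega
    · intro i _
      rfl
  rw [hLHS, key φ hval v hv ha hb d (le_refl d), hsum1, hsum2]
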